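/- For any function f: ℝ^d → [0,∞) (not necessarily measurable), for H^β-almost every x ∈ ℝ^d one has limsup_{Q → x} (1 / H^{β,Q₀}_∞(Q)) ∫_Q f dH^{β,Q₀}_∞ ≥ f(x), where the limsup is over dyadic cubes Q ∈ D(Q₀) containing x with ℓ(Q) → 0. -/

import Mathlib

open MeasureTheory Set
open scoped ENNReal NNReal

noncomputable section

/-- `ℝ^d` with the Euclidean metric. -/
abbrev Rd (d : ℕ) := EuclideanSpace ℝ (Fin d)

/-- Coerce a plain function to a point of `ℝ^d`. -/
def toRd (d : ℕ) (a : Fin d → ℝ) : Rd d := WithLp.toLp 2 a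

/-- The normalization constant `ω_β = π^{β/2}/Γ(β/2+1)`. -/
def omegaConst (β : ℝ) : ℝ := Real.pi ^ (β / 2) / Real.Gamma (β / 2 + 1)

/-- The Hausdorff content `H^β_∞` in `ℝ^d`, via countable covers by balls. -/
def hContent (d : ℕ) (β : ℝ) (E : Set (Rd d)) : ℝ≥0∞ :=
  ⨅ (c : ℕ → Rd d × ℝ) (_ : E ⊆ ⋃ i, Metric.ball (c i).1 (c i).2),
    ∑' i, ENNReal.ofReal (omegaConst β * (c i).2 ^ β)

/-- The Choquet integral of a real-valued (nonnegative) function `g` over `Ω`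
with respect to a set function `H`. -/
def choquet (d : ℕ) (H : Set (Rd d) → ℝ≥0∞) (Ω : Set (Rd d)) (g : Rd d → ℝ) : ℝ≥0∞ :=
  ∫⁻ t in Set.Ioi (0 : ℝ), H {x | x ∈ Ω ∧ t < g x}

/-- The Choquet integral of an `ℝ≥0∞`-valued function `g` over `Ω`
with respect to a set function `H`. -/
def choquetE (d : ℕ) (H : Set (Rd d) → ℝ≥0∞) (Ω : Set (Rd d)) (g : Rd d → ℝ≥0∞) : ℝ≥0∞ :=
  ∫⁻ t in Set.Ioi (0 : ℝ), H {x | x ∈ Ω ∧ ENNReal.ofReal t < g x}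

/-- Closed axis-parallel cube with corner `a` and side length `l`. -/
def cubeSet (d : ℕ) (a : Fin d → ℝ) (l : ℝ) : Set (Rd d) :=
  {y | ∀ i, a i ≤ y i ∧ y i ≤ a i + l}

/-- Open axis-parallel cube with corner `a` and side length `l`. -/
def cubeO (d : ℕ) (a : Fin d → ℝ) (l : ℝ) : Set (Rd d) :=
  {y | ∀ i, a i < y i ∧ y i < a i + l}

/-- Side length of a dyadic cube of generation `k` in the lattice with unit size `l₀`. -/
def dSide (l₀ : ℝ) (k : ℤ) : ℝ := l₀ * 2 ^ k

/-- The dyadic cube, indexed by generation `k : ℤ` and position `m : Fin d → ℤ`,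
of the dyadic lattice `D(Q₀)` generated by the cube `Q₀` with corner `a₀` and
side length `l₀`. -/
def dSet (d : ℕ) (a₀ : Fin d → ℝ) (l₀ : ℝ) (Q : ℤ × (Fin d → ℤ)) : Set (Rd d) :=
  {y | ∀ i, a₀ i + dSide l₀ Q.1 * (Q.2 i : ℝ) ≤ y i ∧
        y i < a₀ i + dSide l₀ Q.1 * ((Q.2 i : ℝ) + 1)}

/-- The dyadic Hausdorff content `H^{β,Q₀}_∞`, via countable covers by dyadic cubes. -/
def dContent (d : ℕ) (β : ℝ) (a₀ : Fin d → ℝ) (l₀ : ℝ) (E : Set (Rd d)) : ℝ≥0∞ :=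
  ⨅ (c : ℕ → ℤ × (Fin d → ℤ)) (_ : E ⊆ ⋃ i, dSet d a₀ l₀ (c i)),
    ∑' i, ENNReal.ofReal (dSide l₀ (c i).1 ^ β)

/-- The dyadic maximal function associated with `H^{β,Q₀}_∞`. -/
def dMax (d : ℕ) (β : ℝ) (a₀ : Fin d → ℝ) (l₀ : ℝ) (f : Rd d → ℝ) (x : Rd d) : ℝ≥0∞ :=
  ⨆ (Q : ℤ × (Fin d → ℤ)) (_ : x ∈ dSet d a₀ l₀ Q),
    choquet d (dContent d β a₀ l₀) (dSet d a₀ l₀ Q) (fun y => |f y|)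
      / ENNReal.ofReal (dSide l₀ Q.1 ^ β)

/-- The dyadic `β`-dimensional sharp maximal function `M^{#}_{β,Q₀}`. -/
def dSharp (d : ℕ) (β : ℝ) (a₀ : Fin d → ℝ) (l₀ : ℝ) (f : Rd d → ℝ) (x : Rd d) : ℝ≥0∞ :=
  ⨆ (Q : ℤ × (Fin d → ℤ)) (_ : x ∈ dSet d a₀ l₀ Q),
    ⨅ (c : ℝ),
      choquet d (dContent d β a₀ l₀) (dSet d a₀ l₀ Q) (fun y => |f y - c|)
        / ENNReal.ofReal (dSide l₀ Q.1 ^ β)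

/-- The `β`-dimensional sharp maximal function `M^{#}_β`, over all axis-parallel cubes. -/
def sharpMax (d : ℕ) (β : ℝ) (f : Rd d → ℝ) (x : Rd d) : ℝ≥0∞ :=
  ⨆ (a : Fin d → ℝ) (l : ℝ) (_ : 0 < l) (_ : x ∈ cubeSet d a l),
    ⨅ (c : ℝ),
      choquet d (hContent d β) (cubeSet d a l) (fun y => |f y - c|) / ENNReal.ofReal (l ^ β)

/-- The `β`-dimensional maximal operator `M_{H^β_∞}` over balls. -/
def ballMax (d : ℕ) (β : ℝ) (f : Rd d → ℝ) (x : Rd d) : ℝ≥0∞ :=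
  ⨆ (r : ℝ) (_ : 0 < r),
    choquet d (hContent d β) (Metric.ball x r) (fun y => |f y|)
      / hContent d β (Metric.ball x r)

/-- The Riesz normalization constant `γ(α)`. -/
def rieszConst (d : ℕ) (α : ℝ) : ℝ :=
  Real.pi ^ ((d : ℝ) / 2) * 2 ^ α * Real.Gamma (α / 2) / Real.Gamma (((d : ℝ) - α) / 2)

/-- The Riesz potential `I_α μ` of a measure. -/
def rieszM (d : ℕ) (α : ℝ) (μ : Measure (Rd d)) (x : Rd d) : ℝ≥0∞ :=
  (ENNReal.ofReal (rieszConst d α))⁻¹ * ∫⁻ y, ENNReal.ofReal (dist x y ^ (α - (d : ℝ))) ∂μ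

/-- The (real-valued) Riesz potential `I_α f` of a function. -/
def rieszR (d : ℕ) (α : ℝ) (f : Rd d → ℝ) (x : Rd d) : ℝ :=
  (rieszConst d α)⁻¹ * ∫ y, f y * dist x y ^ (α - (d : ℝ))

/-- The fractional maximal function `M_α μ` of a measure. -/
def fracMaxM (d : ℕ) (α : ℝ) (μ : Measure (Rd d)) (x : Rd d) : ℝ≥0∞ :=
  ⨆ (a : Fin d → ℝ) (l : ℝ) (_ : 0 < l) (_ : x ∈ cubeSet d a l),
    μ (cubeSet d a l) * ENNReal.ofReal (l ^ (α - (d : ℝ)))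

/-- The fractional maximal function `M_α f` of a function. -/
def fracMaxF (d : ℕ) (α : ℝ) (f : Rd d → ℝ) (x : Rd d) : ℝ≥0∞ :=
  ⨆ (a : Fin d → ℝ) (l : ℝ) (_ : 0 < l) (_ : x ∈ cubeSet d a l),
    (∫⁻ y in cubeSet d a l, ENNReal.ofReal |f y|) * ENNReal.ofReal (l ^ (α - (d : ℝ)))

/-- The weak `L^{p,∞}(H^β_∞)` quasinorm. -/
def weakNorm (d : ℕ) (β : ℝ) (p : ℝ) (g : Rd d → ℝ≥0∞) : ℝ≥0∞ :=
  ⨆ (t : ℝ) (_ : 0 < t),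
    ENNReal.ofReal t * hContent d β {x | ENNReal.ofReal t < g x} ^ (1 / p)

/-- The local Morrey norm `‖μ‖_{M^β(Ω)}`. -/
def morreyNorm (d : ℕ) (β : ℝ) (μ : Measure (Rd d)) (Ω : Set (Rd d)) : ℝ≥0∞ :=
  ⨆ (x : Rd d) (_ : x ∈ Ω) (r : ℝ) (_ : 0 < r),
    μ (Metric.ball x r ∩ Ω) / ENNReal.ofReal (r ^ β)

/-- Generation-`k` cell at position `m` of a dyadic grid with generation offsets `o`. -/
def gcell (d : ℕ) (o : ℤ → Fin d → ℝ) (k : ℤ) (m : Fin d → ℤ) : Set (Rd d) :=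
  {y | ∀ i, o k i + 2 ^ k * (m i : ℝ) ≤ y i ∧ y i < o k i + 2 ^ k * ((m i : ℝ) + 1)}

/-- A dyadic grid in `ℝ^d`: each generation `k` consists of half-open cubes of side `2^k`
partitioning `ℝ^d`, and consecutive generations are nested. -/
structure DyadicGrid (d : ℕ) where
  o : ℤ → Fin d → ℝ
  nested : ∀ k m, ∃ m', gcell d o k m ⊆ gcell d o (k + 1) m'

/-- The dyadic Riesz potential `I^D_α μ` with respect to a dyadic grid. -/
def dyadicRiesz (d : ℕ) (G : DyadicGrid d) (α : ℝ) (μ : Measure (Rd d)) (x : Rd d) : ℝ≥0∞ :=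
  ∑' p : ℤ × (Fin d → ℤ),
    Set.indicator (gcell d G.o p.1 p.2)
      (fun _ => μ (gcell d G.o p.1 p.2) * ENNReal.ofReal (((2 : ℝ) ^ p.1) ^ (α - (d : ℝ)))) x

/-- The exponential on `ℝ≥0∞`. -/
def expE (t : ℝ≥0∞) : ℝ≥0∞ := if t = ∞ then ∞ else ENNReal.ofReal (Real.exp t.toReal)
section Aux
variable {d : ℕ} {β : ℝ} {a₀ : Fin d → ℝ} {l₀ : ℝ}

lemma dSide_pos (hl₀ : 0 < l₀) (k : ℤ) : 0 < dSide l₀ k :=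
  mul_pos hl₀ (zpow_pos two_pos k)

lemma dContent_le_of_cover {S : Set (Rd d)} (c : ℕ → ℤ × (Fin d → ℤ))
    (h : S ⊆ ⋃ i, dSet d a₀ l₀ (c i)) :
    dContent d β a₀ l₀ S ≤ ∑' i, ENNReal.ofReal (dSide l₀ (c i).1 ^ β) :=
  iInf₂_le c h

lemma dContent_mono {S T : Set (Rd d)} (h : S ⊆ T) :
    dContent d β a₀ l₀ S ≤ dContent d β a₀ l₀ T :=
  le_iInf₂ fun c hc => iInf₂_le c (h.trans hc)

lemma rpow_pow_comm {x : ℝ} (hx : 0 ≤ x) (n : ℕ) (β : ℝ) : (x ^ n) ^ β = (x ^ β) ^ n := by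
  rw [← Real.rpow_natCast x n, ← Real.rpow_mul hx, mul_comm, Real.rpow_mul hx,
    Real.rpow_natCast]

lemma exists_small_cube (hβ : 0 < β) (hl₀ : 0 < l₀) {δ : ℝ≥0∞} (hδ : δ ≠ 0) :
    ∃ k : ℤ, ENNReal.ofReal (dSide l₀ k ^ β) < δ := by
  obtain ⟨e, he, hle⟩ : ∃ e : ℝ, 0 < e ∧ ENNReal.ofReal e ≤ δ := by
    rcases eq_or_ne δ ∞ with h | h
    · exact ⟨1, one_pos, by simp [h]⟩
    · exact ⟨δ.toReal, ENNReal.toReal_pos hδ h, ENNReal.ofReal_toReal_le⟩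
  have hq0 : (0:ℝ) < (2⁻¹ : ℝ) ^ β := Real.rpow_pos_of_pos (by norm_num) β
  have hq1 : ((2:ℝ)⁻¹) ^ β < 1 := Real.rpow_lt_one (by norm_num) (by norm_num) hβ
  have hl : (0:ℝ) < l₀ ^ β := Real.rpow_pos_of_pos hl₀ β
  obtain ⟨n, hn⟩ := exists_pow_lt_of_lt_one (div_pos he hl) hq1
  refine ⟨-(n : ℤ), lt_of_lt_of_le ?_ hle⟩
  have hside : dSide l₀ (-(n:ℤ)) ^ β = l₀ ^ β * (((2:ℝ)⁻¹) ^ β) ^ n := by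
    have h2 : ((2:ℝ) : ℝ) ^ (-(n:ℤ)) = ((2:ℝ)⁻¹) ^ n := by
      rw [zpow_neg, zpow_natCast, inv_pow]
    rw [dSide, Real.mul_rpow hl₀.le (by positivity), h2, rpow_pow_comm (by norm_num)]
  rw [hside, ENNReal.ofReal_lt_ofReal_iff he]
  calc l₀ ^ β * (((2:ℝ)⁻¹) ^ β) ^ n < l₀ ^ β * (e / l₀ ^ β) :=
        (mul_lt_mul_iff_right₀ hl).mpr hn
    _ = e := by field_simp

/-- A cheap sequence of cubes with total cost below `ε`. -/
lemma exists_cheap_seq (hβ : 0 < β) (hl₀ : 0 < l₀) {ε : ℝ≥0∞} (hε : ε ≠ 0) :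
    ∃ c : ℕ → ℤ × (Fin d → ℤ), ∑' i, ENNReal.ofReal (dSide l₀ (c i).1 ^ β) ≤ ε := by
  obtain ⟨δ, hδpos, hδsum⟩ := ENNReal.exists_pos_sum_of_countable hε ℕ
  have : ∀ n : ℕ, ∃ k : ℤ, ENNReal.ofReal (dSide l₀ k ^ β) < (δ n : ℝ≥0∞) := fun n =>
    exists_small_cube hβ hl₀ (by exact_mod_cast (hδpos n).ne')
  choose k hk using this
  exact ⟨fun n => (k n, 0), le_trans (ENNReal.tsum_le_tsum fun n => (hk n).le) hδsum.le⟩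

lemma dContent_empty (hβ : 0 < β) (hl₀ : 0 < l₀) :
    dContent d β a₀ l₀ (∅ : Set (Rd d)) = 0 := by
  refine le_antisymm ?_ (zero_le)
  refine ENNReal.le_of_forall_pos_le_add fun ε hε _ => ?_
  obtain ⟨c, hc⟩ := exists_cheap_seq (d := d) hβ hl₀
    (ε := (ε : ℝ≥0∞)) (by exact_mod_cast hε.ne')
  simpa using le_trans (dContent_le_of_cover (a₀ := a₀) c (empty_subset _)) hc

lemma dContent_cube_le (hβ : 0 < β) (hl₀ : 0 < l₀) (p : ℤ × (Fin d → ℤ)) :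
    dContent d β a₀ l₀ (dSet d a₀ l₀ p) ≤ ENNReal.ofReal (dSide l₀ p.1 ^ β) := by
  refine ENNReal.le_of_forall_pos_le_add fun ε hε _ => ?_
  obtain ⟨c, hc⟩ := exists_cheap_seq (d := d) hβ hl₀
    (ε := (ε : ℝ≥0∞)) (by exact_mod_cast hε.ne')
  set C : ℕ → ℤ × (Fin d → ℤ) := fun n => Nat.casesOn n p c with hC
  have hcov : dSet d a₀ l₀ p ⊆ ⋃ i, dSet d a₀ l₀ (C i) := fun x hx =>
    mem_iUnion.mpr ⟨0, hx⟩
  refine le_trans (dContent_le_of_cover C hcov) ?_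
  rw [tsum_eq_zero_add' ENNReal.summable]
  exact add_le_add le_rfl hc
lemma mem_cube_exists (hl₀ : 0 < l₀) (x : Rd d) (K : ℤ) :
    ∃ m : Fin d → ℤ, x ∈ dSet d a₀ l₀ (K, m) := by
  have hs : 0 < dSide l₀ K := dSide_pos hl₀ K
  refine ⟨fun i => ⌊(x i - a₀ i) / dSide l₀ K⌋, fun i => ?_⟩
  constructor
  · have := Int.floor_le ((x i - a₀ i) / dSide l₀ K)
    have := (le_div_iff₀ hs).mp this
    linarith [this]
  · have := Int.lt_floor_add_one ((x i - a₀ i) / dSide l₀ K)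
    have := (div_lt_iff₀ hs).mp this
    linarith [this]

lemma exists_cover_univ (hl₀ : 0 < l₀) :
    ∃ c : ℕ → ℤ × (Fin d → ℤ), (Set.univ : Set (Rd d)) ⊆ ⋃ i, dSet d a₀ l₀ (c i) := by
  obtain ⟨u, hu⟩ := exists_surjective_nat (Fin d → ℤ)
  refine ⟨fun n => (0, u n), fun x _ => ?_⟩
  obtain ⟨m, hm⟩ := mem_cube_exists (a₀ := a₀) hl₀ x 0
  obtain ⟨n, rfl⟩ := hu m
  exact mem_iUnion.mpr ⟨n, hm⟩

lemma exists_cover_le (hl₀ : 0 < l₀) (S : Set (Rd d)) {ε : ℝ≥0∞} (hε : ε ≠ 0) :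
    ∃ c : ℕ → ℤ × (Fin d → ℤ), S ⊆ (⋃ i, dSet d a₀ l₀ (c i)) ∧
      ∑' i, ENNReal.ofReal (dSide l₀ (c i).1 ^ β) ≤ dContent d β a₀ l₀ S + ε := by
  by_cases htop : dContent d β a₀ l₀ S = ∞
  · obtain ⟨c, hc⟩ := exists_cover_univ (a₀ := a₀) hl₀
    exact ⟨c, (subset_univ S).trans hc, by simp [htop]⟩
  · have hlt : dContent d β a₀ l₀ S < dContent d β a₀ l₀ S + ε :=
      ENNReal.lt_add_right htop hε
    conv_lhs at hlt => rw [dContent]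
    rw [iInf_lt_iff] at hlt
    obtain ⟨c, hc⟩ := hlt
    rw [iInf_lt_iff] at hc
    obtain ⟨hcov, hlt⟩ := hc
    exact ⟨c, hcov, hlt.le⟩

lemma dContent_iUnion_nat (hβ : 0 < β) (hl₀ : 0 < l₀) (S : ℕ → Set (Rd d)) :
    dContent d β a₀ l₀ (⋃ n, S n) ≤ ∑' n, dContent d β a₀ l₀ (S n) := by
  refine ENNReal.le_of_forall_pos_le_add fun ε hε _ => ?_
  obtain ⟨δ, hδpos, hδsum⟩ :=
    ENNReal.exists_pos_sum_of_countable (ε := (ε : ℝ≥0∞)) (by exact_mod_cast hε.ne') ℕ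
  have : ∀ n, ∃ c : ℕ → ℤ × (Fin d → ℤ), S n ⊆ (⋃ i, dSet d a₀ l₀ (c i)) ∧
      ∑' i, ENNReal.ofReal (dSide l₀ (c i).1 ^ β) ≤ dContent d β a₀ l₀ (S n) + δ n :=
    fun n => exists_cover_le hl₀ (S n) (by exact_mod_cast (hδpos n).ne')
  choose c hcov hsum using this
  set e : ℕ × ℕ ≃ ℕ := Denumerable.eqv (ℕ × ℕ) with he
  set C : ℕ → ℤ × (Fin d → ℤ) := fun n => c (e.symm n).1 (e.symm n).2 with hC
  have hCcov : (⋃ n, S n) ⊆ ⋃ i, dSet d a₀ l₀ (C i) := by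
    intro x hx
    obtain ⟨n, hn⟩ := mem_iUnion.mp hx
    obtain ⟨i, hi⟩ := mem_iUnion.mp (hcov n hn)
    refine mem_iUnion.mpr ⟨e (n, i), ?_⟩
    simpa [hC, Equiv.symm_apply_apply] using hi
  refine le_trans (dContent_le_of_cover C hCcov) ?_
  have h1 : ∑' i, ENNReal.ofReal (dSide l₀ (C i).1 ^ β)
      = ∑' p : ℕ × ℕ, ENNReal.ofReal (dSide l₀ (c p.1 p.2).1 ^ β) := by
    rw [← Equiv.tsum_eq e.symm (fun p => ENNReal.ofReal (dSide l₀ (c p.1 p.2).1 ^ β))]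
  rw [h1, ENNReal.tsum_prod (f := fun a b => ENNReal.ofReal (dSide l₀ (c a b).1 ^ β))]
  calc ∑' n, ∑' i, ENNReal.ofReal (dSide l₀ (c n i).1 ^ β)
      ≤ ∑' n, (dContent d β a₀ l₀ (S n) + δ n) := ENNReal.tsum_le_tsum hsum
    _ = (∑' n, dContent d β a₀ l₀ (S n)) + ∑' n, (δ n : ℝ≥0∞) := ENNReal.tsum_add
    _ ≤ (∑' n, dContent d β a₀ l₀ (S n)) + ε := add_le_add le_rfl hδsum.le

lemma dContent_iUnion_le {ι : Type} [Countable ι] (hβ : 0 < β) (hl₀ : 0 < l₀)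
    (S : ι → Set (Rd d)) :
    dContent d β a₀ l₀ (⋃ i, S i) ≤ ∑' i, dContent d β a₀ l₀ (S i) := by
  cases isEmpty_or_nonempty ι
  · simp [iUnion_of_empty, dContent_empty hβ hl₀]
  letI := Encodable.ofCountable ι
  set T : ℕ → Set (Rd d) := fun n => ⋃ (i : ι) (_ : Encodable.encode i = n), S i with hT
  have hsub : (⋃ i, S i) ⊆ ⋃ n, T n := by
    intro x hx
    obtain ⟨i, hi⟩ := mem_iUnion.mp hx
    exact mem_iUnion.mpr ⟨Encodable.encode i, mem_iUnion.mpr ⟨i, mem_iUnion.mpr ⟨rfl, hi⟩⟩⟩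
  refine le_trans (dContent_mono hsub) (le_trans (dContent_iUnion_nat hβ hl₀ T) (le_of_eq ?_))
  have hTe : ∀ i : ι, T (Encodable.encode i) = S i := by
    intro i
    apply Subset.antisymm
    · refine iUnion₂_subset fun j hj => ?_
      have : j = i := Encodable.encode_injective hj
      subst this; exact Subset.rfl
    · intro x hx; exact mem_iUnion.mpr ⟨i, mem_iUnion.mpr ⟨rfl, hx⟩⟩
  have hsupp : Function.support (fun n => dContent d β a₀ l₀ (T n))
      ⊆ Set.range (Encodable.encode : ι → ℕ) := by
    intro n hn
    by_contra hnr
    apply hn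
    have hTn : T n = ∅ := by
      apply eq_empty_iff_forall_notMem.mpr
      intro x hx
      obtain ⟨i, hi⟩ := mem_iUnion.mp hx
      obtain ⟨hie, _⟩ := mem_iUnion.mp hi
      exact hnr ⟨i, hie⟩
    show dContent d β a₀ l₀ (T n) = 0
    rw [hTn]
    exact dContent_empty hβ hl₀
  have heq := Function.Injective.tsum_eq (g := (Encodable.encode : ι → ℕ))
      Encodable.encode_injective (f := fun n => dContent d β a₀ l₀ (T n)) hsupp
  rw [← heq]
  exact tsum_congr fun i => congrArg (dContent d β a₀ l₀) (hTe i)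

lemma dContent_iUnion_null {ι : Type} [Countable ι] (hβ : 0 < β) (hl₀ : 0 < l₀)
    {S : ι → Set (Rd d)} (h : ∀ i, dContent d β a₀ l₀ (S i) = 0) :
    dContent d β a₀ l₀ (⋃ i, S i) = 0 :=
  le_antisymm (le_trans (dContent_iUnion_le hβ hl₀ S) (by simp [h])) (zero_le)

lemma dContent_union_null {X Y : Set (Rd d)} (hβ : 0 < β) (hl₀ : 0 < l₀)
    (hX : dContent d β a₀ l₀ X = 0) (hY : dContent d β a₀ l₀ Y = 0) :
    dContent d β a₀ l₀ (X ∪ Y) = 0 := by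
  rw [Set.union_eq_iUnion]
  exact dContent_iUnion_null hβ hl₀ (fun b => by cases b <;> simpa)
lemma dSet_nested (hl₀ : 0 < l₀) {p q : ℤ × (Fin d → ℤ)} (hle : q.1 ≤ p.1)
    (hne : (dSet d a₀ l₀ q ∩ dSet d a₀ l₀ p).Nonempty) :
    dSet d a₀ l₀ q ⊆ dSet d a₀ l₀ p := by
  obtain ⟨y, hyq, hyp⟩ := hne
  set s := dSide l₀ q.1 with hs
  set S := dSide l₀ p.1 with hS
  have hspos : 0 < s := dSide_pos hl₀ q.1
  set j : ℕ := (p.1 - q.1).toNat with hj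
  set T : ℤ := 2 ^ j with hT
  have hST : S = s * (T : ℝ) := by
    have hj' : (j : ℤ) = p.1 - q.1 := Int.toNat_of_nonneg (sub_nonneg.mpr hle)
    have : (2:ℝ) ^ p.1 = 2 ^ q.1 * 2 ^ (j : ℤ) := by
      rw [hj', ← zpow_add₀ (two_ne_zero), add_sub_cancel]
    rw [hS, hs, dSide, dSide, this, hT]
    push_cast
    rw [← zpow_natCast (2:ℝ) j]
    ring
  intro z hz i
  obtain ⟨hq1, hq2⟩ := hyq i
  obtain ⟨hp1, hp2⟩ := hyp i
  obtain ⟨hz1, hz2⟩ := hz i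
  set m : ℤ := q.2 i
  set M : ℤ := p.2 i
  -- integer inequalities
  have h1 : s * (m : ℝ) < s * ((T : ℝ) * ((M : ℝ) + 1)) := by
    have : s * (m:ℝ) < S * ((M:ℝ) + 1) := by linarith
    rw [hST] at this; linarith [this]
  have h1' : (m : ℤ) < T * (M + 1) := by
    have := (mul_lt_mul_iff_right₀ hspos).mp h1
    exact_mod_cast this
  have h2 : s * ((T:ℝ) * (M:ℝ)) < s * ((m:ℝ) + 1) := by
    have : S * (M:ℝ) < s * ((m:ℝ) + 1) := by linarith
    rw [hST] at this; linarith [this]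
  have h2' : T * M < (m : ℤ) + 1 := by
    have := (mul_lt_mul_iff_right₀ hspos).mp h2
    exact_mod_cast this
  have hub : (m : ℤ) + 1 ≤ T * (M + 1) := h1'
  have hlb : T * M ≤ (m : ℤ) := Int.lt_add_one_iff.mp h2'
  constructor
  · have : S * (M:ℝ) ≤ s * (m:ℝ) := by
      rw [hST, mul_assoc]
      have : ((T * M : ℤ) : ℝ) ≤ ((m : ℤ) : ℝ) := by exact_mod_cast hlb
      push_cast at this
      nlinarith [hspos]
    linarith
  · have : s * ((m:ℝ) + 1) ≤ S * ((M:ℝ) + 1) := by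
      rw [hST, mul_assoc]
      have : (((m : ℤ) + 1 : ℤ) : ℝ) ≤ ((T * (M + 1) : ℤ) : ℝ) := by exact_mod_cast hub
      push_cast at this
      nlinarith [hspos]
    linarith

/-- The key density lemma: points of `E` around which all small dyadic cubes
see `E` with density at most `1 - δ` form a `dContent`-null set. -/
lemma key_density (hβ : 0 < β) (hl₀ : 0 < l₀) (E : Set (Rd d)) {δ : ℝ}
    (hδ0 : 0 < δ) (hδ1 : δ < 1) (K : ℤ) :
    dContent d β a₀ l₀ {x | x ∈ E ∧ ∀ Q : ℤ × (Fin d → ℤ), Q.1 ≤ K → x ∈ dSet d a₀ l₀ Q →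
      dContent d β a₀ l₀ (dSet d a₀ l₀ Q ∩ E) ≤
        ENNReal.ofReal (1 - δ) * dContent d β a₀ l₀ (dSet d a₀ l₀ Q)} = 0 := by
  set A := {x | x ∈ E ∧ ∀ Q : ℤ × (Fin d → ℤ), Q.1 ≤ K → x ∈ dSet d a₀ l₀ Q →
      dContent d β a₀ l₀ (dSet d a₀ l₀ Q ∩ E) ≤
        ENNReal.ofReal (1 - δ) * dContent d β a₀ l₀ (dSet d a₀ l₀ Q)} with hA
  have hcover : A ⊆ ⋃ m : Fin d → ℤ, (A ∩ dSet d a₀ l₀ (K, m)) := by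
    intro x hx
    obtain ⟨m, hm⟩ := mem_cube_exists (a₀ := a₀) hl₀ x K
    exact mem_iUnion.mpr ⟨m, hx, hm⟩
  refine le_antisymm (le_trans (dContent_mono hcover) ?_) (zero_le)
  rw [dContent_iUnion_null hβ hl₀ (fun m => ?_)]
  -- show each piece is null
  set R := dSet d a₀ l₀ (K, m) with hR
  set a := dContent d β a₀ l₀ (A ∩ R) with ha
  have hafin : a ≠ ∞ :=
    ne_top_of_le_ne_top ENNReal.ofReal_ne_top
      (le_trans (dContent_mono inter_subset_right) (dContent_cube_le hβ hl₀ (K, m)))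
  have hstep : ∀ ε : ℝ≥0∞, ε ≠ 0 → a ≤ ENNReal.ofReal (1 - δ) * a + ε := by
    intro ε hε
    obtain ⟨c, hcov, hsum⟩ := exists_cover_le hl₀ (A ∩ R) hε
    set c' : ℕ → ℤ × (Fin d → ℤ) := fun n => if (c n).1 ≤ K then c n else (K, m) with hc'
    have hc'le : ∀ n, (c' n).1 ≤ K := by
      intro n; rw [hc']; dsimp only
      split <;> simp_all
    have hcov' : A ∩ R ⊆ ⋃ n, dSet d a₀ l₀ (c' n) := by
      intro x hx
      obtain ⟨n, hn⟩ := mem_iUnion.mp (hcov hx)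
      refine mem_iUnion.mpr ⟨n, ?_⟩
      rw [hc']; dsimp only
      split
      · exact hn
      · exact hx.2
    have hcost : ∀ n, ENNReal.ofReal (dSide l₀ (c' n).1 ^ β)
        ≤ ENNReal.ofReal (dSide l₀ (c n).1 ^ β) := by
      intro n
      rw [hc']; dsimp only
      split
      · exact le_rfl
      · rename_i h
        push_neg at h
        apply ENNReal.ofReal_le_ofReal
        apply Real.rpow_le_rpow (dSide_pos hl₀ K).le _ hβ.le
        exact mul_le_mul_of_nonneg_left (zpow_le_zpow_right₀ one_le_two h.le) hl₀.le
    have hpern : ∀ n, dContent d β a₀ l₀ ((A ∩ R) ∩ dSet d a₀ l₀ (c' n))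
        ≤ ENNReal.ofReal (1 - δ) * ENNReal.ofReal (dSide l₀ (c' n).1 ^ β) := by
      intro n
      rcases eq_empty_or_nonempty ((A ∩ R) ∩ dSet d a₀ l₀ (c' n)) with hemp | ⟨x, hx⟩
      · rw [hemp, dContent_empty hβ hl₀]; exact zero_le
      · have hxA : x ∈ A := hx.1.1
        have hxQ : x ∈ dSet d a₀ l₀ (c' n) := hx.2
        have := hxA.2 (c' n) (hc'le n) hxQ
        calc dContent d β a₀ l₀ ((A ∩ R) ∩ dSet d a₀ l₀ (c' n))
            ≤ dContent d β a₀ l₀ (dSet d a₀ l₀ (c' n) ∩ E) :=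
              dContent_mono (fun y hy => ⟨hy.2, hy.1.1.1⟩)
          _ ≤ ENNReal.ofReal (1 - δ) * dContent d β a₀ l₀ (dSet d a₀ l₀ (c' n)) := this
          _ ≤ ENNReal.ofReal (1 - δ) * ENNReal.ofReal (dSide l₀ (c' n).1 ^ β) :=
              mul_le_mul_right (dContent_cube_le hβ hl₀ (c' n)) _
    have hsub2 : A ∩ R ⊆ ⋃ n, ((A ∩ R) ∩ dSet d a₀ l₀ (c' n)) := by
      intro x hx
      obtain ⟨n, hn⟩ := mem_iUnion.mp (hcov' hx)
      exact mem_iUnion.mpr ⟨n, hx, hn⟩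
    calc a ≤ ∑' n, dContent d β a₀ l₀ ((A ∩ R) ∩ dSet d a₀ l₀ (c' n)) :=
          le_trans (dContent_mono hsub2) (dContent_iUnion_nat hβ hl₀ _)
      _ ≤ ∑' n, ENNReal.ofReal (1 - δ) * ENNReal.ofReal (dSide l₀ (c' n).1 ^ β) :=
          ENNReal.tsum_le_tsum hpern
      _ = ENNReal.ofReal (1 - δ) * ∑' n, ENNReal.ofReal (dSide l₀ (c' n).1 ^ β) :=
          ENNReal.tsum_mul_left
      _ ≤ ENNReal.ofReal (1 - δ) * (a + ε) := by
          apply mul_le_mul_right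
          exact le_trans (ENNReal.tsum_le_tsum hcost) hsum
      _ = ENNReal.ofReal (1 - δ) * a + ENNReal.ofReal (1 - δ) * ε := by rw [mul_add]
      _ ≤ ENNReal.ofReal (1 - δ) * a + ε := by
          apply add_le_add le_rfl
          apply mul_le_of_le_one_left' (ENNReal.ofReal_le_one.mpr (by linarith))
  have hle : a ≤ ENNReal.ofReal (1 - δ) * a := by
    refine ENNReal.le_of_forall_pos_le_add fun ε hε _ => ?_
    exact hstep ε (by exact_mod_cast hε.ne')
  by_contra ha0
  have hlt : ENNReal.ofReal (1 - δ) * a < 1 * a := by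
    refine (ENNReal.mul_lt_mul_iff_left ha0 hafin).mpr ?_
    exact ENNReal.ofReal_lt_one.mpr (by linarith)
  rw [one_mul] at hlt
  exact absurd hle (not_le.mpr hlt)
lemma choquet_ge (q : ℝ) (hq : 0 < q) (Ω : Set (Rd d)) (f : Rd d → ℝ) :
    ENNReal.ofReal q * dContent d β a₀ l₀ (Ω ∩ {y | q < f y})
      ≤ choquet d (dContent d β a₀ l₀) Ω f := by
  set c := dContent d β a₀ l₀ (Ω ∩ {y | q < f y}) with hc
  have h0 : ENNReal.ofReal q * c = ∫⁻ _ in Set.Ioo (0:ℝ) q, c := by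
    rw [setLIntegral_const, Real.volume_Ioo, sub_zero, mul_comm]
  rw [h0, choquet]
  have h1 : ∫⁻ _ in Set.Ioo (0:ℝ) q, c
      ≤ ∫⁻ t in Set.Ioo (0:ℝ) q, dContent d β a₀ l₀ {x | x ∈ Ω ∧ t < f x} := by
    apply lintegral_mono_ae
    rw [ae_restrict_iff' measurableSet_Ioo]
    refine Filter.Eventually.of_forall fun t ht => ?_
    refine dContent_mono fun y hy => ⟨hy.1, lt_trans ht.2 hy.2⟩
  refine le_trans h1 ?_
  exact lintegral_mono' (Measure.restrict_mono Set.Ioo_subset_Ioi_self le_rfl) le_rfl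

lemma omegaConst_pos (hβ : 0 < β) : 0 < omegaConst β := by
  apply div_pos (Real.rpow_pos_of_pos Real.pi_pos _)
  exact Real.Gamma_pos_of_pos (by linarith)

lemma hContent_zero (hβ : 0 < β) (hl₀ : 0 < l₀) {S : Set (Rd d)}
    (h : dContent d β a₀ l₀ S = 0) : hContent d β S = 0 := by
  set Cr : ℝ := omegaConst β * ((d : ℝ) + 2) ^ β with hCr
  have hCrpos : 0 < Cr :=
    mul_pos (omegaConst_pos hβ) (Real.rpow_pos_of_pos (by positivity) β)
  refine le_antisymm ?_ (zero_le)
  refine ENNReal.le_of_forall_pos_le_add fun ε hε _ => ?_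
  set ε' : ℝ := (ε : ℝ) / (Cr + 1) with hε'
  have hε'pos : 0 < ε' := div_pos (by exact_mod_cast hε) (by linarith)
  obtain ⟨c, hcov, hsum⟩ := exists_cover_le hl₀ S (ε := ENNReal.ofReal ε')
    (by simp [ENNReal.ofReal_eq_zero, not_le, hε'pos])
  rw [h, zero_add] at hsum
  -- ball cover
  set ctr : (ℤ × (Fin d → ℤ)) → Rd d := fun p => toRd d (fun i => a₀ i + dSide l₀ p.1 * (p.2 i)) with hctr
  set bc : ℕ → Rd d × ℝ := fun n => (ctr (c n), ((d : ℝ) + 2) * dSide l₀ (c n).1) with hbc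
  have hball : ∀ p : ℤ × (Fin d → ℤ),
      dSet d a₀ l₀ p ⊆ Metric.ball (ctr p) (((d : ℝ) + 2) * dSide l₀ p.1) := by
    intro p y hy
    rw [Metric.mem_ball, EuclideanSpace.dist_eq]
    set s := dSide l₀ p.1 with hs
    have hspos : 0 < s := dSide_pos hl₀ p.1
    set g : Fin d → ℝ := fun i => dist (y i) (ctr p i) with hg
    have hterm : ∀ i : Fin d, g i ^ 2 ≤ s ^ 2 := by
      intro i
      obtain ⟨h1, h2⟩ := hy i
      have hci : ctr p i = a₀ i + s * (p.2 i : ℝ) := rfl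
      have habs : |y i - ctr p i| ≤ s := by
        rw [hci, abs_le]
        constructor <;> nlinarith [h1, h2, hspos]
      have : g i = |y i - ctr p i| := Real.dist_eq _ _
      rw [this]
      nlinarith [abs_nonneg (y i - ctr p i), habs]
    have hsumb : (∑ i, g i ^ 2) ≤ (((d:ℝ) + 1) * s) ^ 2 := by
      have h1 : (∑ i, g i ^ 2) ≤ ∑ _i : Fin d, s ^ 2 := Finset.sum_le_sum fun i _ => hterm i
      have h2 : (∑ _i : Fin d, s ^ 2) = (d : ℝ) * s ^ 2 := by
        rw [Finset.sum_const]
        simp [mul_comm]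
      nlinarith [hspos, Nat.cast_nonneg (α := ℝ) d]
    have h3 : Real.sqrt (∑ i, g i ^ 2) ≤ ((d:ℝ) + 1) * s := by
      calc Real.sqrt (∑ i, g i ^ 2) ≤ Real.sqrt ((((d:ℝ) + 1) * s) ^ 2) :=
            Real.sqrt_le_sqrt hsumb
        _ = ((d:ℝ) + 1) * s := Real.sqrt_sq (by positivity)
    have : Real.sqrt (∑ i, g i ^ 2) < ((d:ℝ) + 2) * s := by nlinarith [hspos]
    exact this
  have hcov2 : S ⊆ ⋃ n, Metric.ball (bc n).1 (bc n).2 := by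
    intro x hx
    obtain ⟨n, hn⟩ := mem_iUnion.mp (hcov hx)
    exact mem_iUnion.mpr ⟨n, hball (c n) hn⟩
  have hle : hContent d β S ≤ ∑' n, ENNReal.ofReal (omegaConst β * (bc n).2 ^ β) :=
    iInf₂_le bc hcov2
  have hcosteq : ∀ n, ENNReal.ofReal (omegaConst β * (bc n).2 ^ β)
      = ENNReal.ofReal Cr * ENNReal.ofReal (dSide l₀ (c n).1 ^ β) := by
    intro n
    have hs : (bc n).2 = ((d : ℝ) + 2) * dSide l₀ (c n).1 := rfl
    rw [hs, Real.mul_rpow (by positivity) (dSide_pos hl₀ (c n).1).le]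
    rw [← ENNReal.ofReal_mul hCrpos.le, hCr]
    ring_nf
  calc hContent d β S ≤ ∑' n, ENNReal.ofReal (omegaConst β * (bc n).2 ^ β) := hle
    _ = ENNReal.ofReal Cr * ∑' n, ENNReal.ofReal (dSide l₀ (c n).1 ^ β) := by
        rw [← ENNReal.tsum_mul_left]; exact tsum_congr hcosteq
    _ ≤ ENNReal.ofReal Cr * ENNReal.ofReal ε' := mul_le_mul_right hsum _
    _ = ENNReal.ofReal (Cr * ε') := (ENNReal.ofReal_mul hCrpos.le).symm
    _ ≤ ENNReal.ofReal (ε : ℝ) := by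
        apply ENNReal.ofReal_le_ofReal
        rw [hε']
        rw [div_eq_mul_inv, ← mul_assoc]
        calc Cr * (ε:ℝ) * (Cr + 1)⁻¹ ≤ (Cr + 1) * (ε:ℝ) * (Cr + 1)⁻¹ := by
              apply mul_le_mul_of_nonneg_right _ (by positivity)
              nlinarith [hCrpos, (ε:ℝ), NNReal.coe_nonneg ε]
          _ = (ε:ℝ) := by field_simp
    _ = 0 + (ε : ℝ≥0∞) := by rw [zero_add, ENNReal.ofReal_coe_nnreal]

end Aux

/-- Lebesgue-type differentiation for dyadic Hausdorff content: for `H^β`-a.e. `x`,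
the limsup of dyadic averages of `f` on cubes shrinking to `x` is at least `f x`. -/
theorem dyadic_density_limsup (d : ℕ) (β : ℝ) (hβ : 0 < β) (hβd : β ≤ d)
    (a₀ : Fin d → ℝ) (l₀ : ℝ) (hl₀ : 0 < l₀) (f : Rd d → ℝ) (hf : ∀ x, 0 ≤ f x) :
    hContent d β {x | ¬ ∀ ε : ℝ, 0 < ε → ∀ K : ℤ, ∃ Q : ℤ × (Fin d → ℤ), Q.1 ≤ K ∧
        x ∈ dSet d a₀ l₀ Q ∧
        ENNReal.ofReal (f x - ε) ≤
          choquet d (dContent d β a₀ l₀) (dSet d a₀ l₀ Q) f /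
            dContent d β a₀ l₀ (dSet d a₀ l₀ Q)} = 0 := by
  classical
  set B₀ : Set (Rd d) := ⋃ p : ℤ × (Fin d → ℤ),
    (if dContent d β a₀ l₀ (dSet d a₀ l₀ p) = 0 then dSet d a₀ l₀ p else ∅) with hB₀
  have hB₀null : dContent d β a₀ l₀ B₀ = 0 := by
    apply dContent_iUnion_null hβ hl₀
    intro p
    split
    · assumption
    · exact dContent_empty hβ hl₀
  set Lev : ℚ → Set (Rd d) := fun q => {y | (q:ℝ) < f y} with hLev
  set Aset : ℚ × ℚ × ℤ → Set (Rd d) := fun r =>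
    if 0 < (r.1:ℝ) ∧ 0 < (r.2.1:ℝ) ∧ (r.2.1:ℝ) < 1 then
      {x | x ∈ Lev r.1 ∧ ∀ Q : ℤ × (Fin d → ℤ), Q.1 ≤ r.2.2 → x ∈ dSet d a₀ l₀ Q →
        dContent d β a₀ l₀ (dSet d a₀ l₀ Q ∩ Lev r.1) ≤
          ENNReal.ofReal (1 - (r.2.1:ℝ)) * dContent d β a₀ l₀ (dSet d a₀ l₀ Q)}
    else ∅ with hAset
  have hAnull : dContent d β a₀ l₀ (⋃ r, Aset r) = 0 := by
    apply dContent_iUnion_null hβ hl₀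
    intro r
    rw [hAset]
    dsimp only
    split
    · rename_i hcond
      exact key_density hβ hl₀ (Lev r.1) hcond.2.1 hcond.2.2 r.2.2
    · exact dContent_empty hβ hl₀
  have hNnull : dContent d β a₀ l₀ (B₀ ∪ ⋃ r, Aset r) = 0 :=
    dContent_union_null hβ hl₀ hB₀null hAnull
  have hsubset : {x : Rd d | ¬ ∀ ε : ℝ, 0 < ε → ∀ K : ℤ, ∃ Q : ℤ × (Fin d → ℤ), Q.1 ≤ K ∧
        x ∈ dSet d a₀ l₀ Q ∧
        ENNReal.ofReal (f x - ε) ≤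
          choquet d (dContent d β a₀ l₀) (dSet d a₀ l₀ Q) f /
            dContent d β a₀ l₀ (dSet d a₀ l₀ Q)} ⊆ B₀ ∪ ⋃ r, Aset r := by
    intro x hx
    simp only [mem_setOf_eq] at hx
    push_neg at hx
    obtain ⟨ε, hε, K, hK⟩ := hx
    obtain ⟨m0, hm0⟩ := mem_cube_exists (a₀ := a₀) hl₀ x K
    have hfε : 0 < f x - ε := by
      by_contra hcon
      push_neg at hcon
      have h0 : ENNReal.ofReal (f x - ε) = 0 := ENNReal.ofReal_eq_zero.mpr hcon
      have hlt := hK (K, m0) le_rfl hm0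
      rw [h0] at hlt
      exact ENNReal.not_lt_zero hlt
    by_cases hB : ∃ p : ℤ × (Fin d → ℤ), x ∈ dSet d a₀ l₀ p ∧
        dContent d β a₀ l₀ (dSet d a₀ l₀ p) = 0
    · left
      obtain ⟨p, hp1, hp2⟩ := hB
      refine mem_iUnion.mpr ⟨p, ?_⟩
      rw [if_pos hp2]
      exact hp1
    · right
      push_neg at hB
      obtain ⟨q, hq1, hq2⟩ := exists_rat_btwn (show f x - ε < f x by linarith)
      have hq0 : 0 < (q:ℝ) := lt_trans hfε hq1
      have hdiv : (f x - ε)/(q:ℝ) < 1 := (div_lt_one hq0).mpr hq1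
      have hdiv0 : 0 < (f x - ε)/(q:ℝ) := div_pos hfε hq0
      obtain ⟨ρ, hρ1, hρ2⟩ := exists_rat_btwn hdiv
      have hδ0 : 0 < ((1 - ρ : ℚ):ℝ) := by push_cast; linarith
      have hδ1 : ((1 - ρ : ℚ):ℝ) < 1 := by push_cast; linarith [lt_trans hdiv0 hρ1]
      refine mem_iUnion.mpr ⟨(q, 1 - ρ, K), ?_⟩
      rw [hAset]
      dsimp only
      rw [if_pos ⟨hq0, hδ0, hδ1⟩]
      refine ⟨hq2, ?_⟩
      intro Q hQ1 hQ2
      by_contra hcon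
      push_neg at hcon
      have h3 : dContent d β a₀ l₀ (dSet d a₀ l₀ Q) ≠ 0 := hB Q hQ2
      have h4 : dContent d β a₀ l₀ (dSet d a₀ l₀ Q) ≠ ∞ :=
        ne_top_of_le_ne_top ENNReal.ofReal_ne_top (dContent_cube_le hβ hl₀ Q)
      have h5 : f x - ε ≤ (q:ℝ) * (1 - ((1 - ρ : ℚ):ℝ)) := by
        have hle : (f x - ε)/(q:ℝ) ≤ (ρ:ℝ) := le_of_lt hρ1
        have : f x - ε ≤ (ρ:ℝ) * (q:ℝ) := by
          calc f x - ε = (f x - ε)/(q:ℝ) * (q:ℝ) := by field_simp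
            _ ≤ (ρ:ℝ) * (q:ℝ) := mul_le_mul_of_nonneg_right hle hq0.le
        push_cast
        linarith [this]
      have h6 : ENNReal.ofReal (q:ℝ) *
          (ENNReal.ofReal (1 - ((1 - ρ : ℚ):ℝ)) * dContent d β a₀ l₀ (dSet d a₀ l₀ Q))
          ≤ choquet d (dContent d β a₀ l₀) (dSet d a₀ l₀ Q) f :=
        le_trans (mul_le_mul_right hcon.le _)
          (choquet_ge (q:ℝ) hq0 (dSet d a₀ l₀ Q) f)
      have h7 : ENNReal.ofReal (f x - ε) * dContent d β a₀ l₀ (dSet d a₀ l₀ Q)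
          ≤ choquet d (dContent d β a₀ l₀) (dSet d a₀ l₀ Q) f := by
        refine le_trans ?_ h6
        rw [← mul_assoc]
        refine mul_le_mul_left ?_ _
        rw [← ENNReal.ofReal_mul hq0.le]
        exact ENNReal.ofReal_le_ofReal h5
      have h8 : ENNReal.ofReal (f x - ε) ≤
          choquet d (dContent d β a₀ l₀) (dSet d a₀ l₀ Q) f /
            dContent d β a₀ l₀ (dSet d a₀ l₀ Q) := by
        rw [ENNReal.le_div_iff_mul_le (Or.inl h3) (Or.inl h4)]
        exact h7
      exact absurd h8 (not_le.mpr (hK Q hQ1 hQ2))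
  have hBadNull : dContent d β a₀ l₀ {x : Rd d | ¬ ∀ ε : ℝ, 0 < ε → ∀ K : ℤ,
      ∃ Q : ℤ × (Fin d → ℤ), Q.1 ≤ K ∧ x ∈ dSet d a₀ l₀ Q ∧
        ENNReal.ofReal (f x - ε) ≤
          choquet d (dContent d β a₀ l₀) (dSet d a₀ l₀ Q) f /
            dContent d β a₀ l₀ (dSet d a₀ l₀ Q)} = 0 :=
    le_antisymm (le_trans (dContent_mono hsubset) hNnull.le) (zero_le)
  exact hContent_zero hβ hl₀ hBadNull
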